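/- (Submultiplicativity of ergodicity coefficients) Let f : ℝ≥0 → ℝ be convex with f(1) = 0 and let P, Q be transition matrices on 𝒳. Then η^f(PQ) ≤ η^f(P) · η^f(Q), where (PQ)(x,y) := ∑_z P(x,z)Q(z,y). -/

import Mathlib

open Finset

/-- A transition matrix on a finite state space `X`: nonnegative entries, rows sum to one. -/
def IsTransMat {X : Type*} [Fintype X] (M : X → X → ℝ) : Prop :=
  (∀ x y, 0 ≤ M x y) ∧ ∀ x, ∑ y, M x y = 1

/-- `f'(∞) := lim_{x→0⁺} x f(1/x)` in the extended reals. -/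
noncomputable def fDerivInfty (f : ℝ → ℝ) : EReal :=
  Filter.limUnder (nhdsWithin (0 : ℝ) (Set.Ioi 0)) fun x => ((x * f (1 / x) : ℝ) : EReal)

/-- The extended-real-valued π-weighted f-divergence between transition matrices, with the
conventions `0·f(0/0) := 0` and `0·f(a/0) := a·f'(∞)` for `a > 0`. -/
noncomputable def DfE {X : Type*} [Fintype X] (π : X → ℝ) (f : ℝ → ℝ)
    (M L : X → X → ℝ) : EReal :=
  ∑ x, ∑ y,
    if L x y = 0 then
      (if M x y = 0 then 0 else ((π x * M x y : ℝ) : EReal) * fDerivInfty f)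
    else ((π x * L x y * f (M x y / L x y) : ℝ) : EReal)

/-- Matrix product of transition matrices. -/
def matMul {X : Type*} [Fintype X] (M P : X → X → ℝ) : X → X → ℝ :=
  fun x y => ∑ z, M x z * P z y

/-- The f-divergence ergodicity coefficient on the space of transition matrices. -/
noncomputable def etaF {X : Type*} [Fintype X] (π : X → ℝ) (f : ℝ → ℝ)
    (P : X → X → ℝ) : EReal :=
  sSup {r : EReal | ∃ M L : X → X → ℝ, IsTransMat M ∧ IsTransMat L ∧ M ≠ L ∧
    0 < DfE π f M L ∧ DfE π f M L ≠ ⊤ ∧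
    r = DfE π f (matMul M P) (matMul L P) * ((((DfE π f M L).toReal)⁻¹ : ℝ) : EReal)}

open Filter Topology

lemma slope_mono' (f : ℝ → ℝ) (hf : ConvexOn ℝ (Set.Ici 0) f) {a x y : ℝ} (ha : 0 ≤ a)
    (hx : a < x) (hy : x ≤ y) : (f x - f a) / (x - a) ≤ (f y - f a) / (y - a) :=
  hf.secant_mono ha (le_trans ha hx.le) (by linarith : (0:ℝ) ≤ y) (by linarith) (by linarith) hy

lemma fDI_exists (f : ℝ → ℝ) (hf : ConvexOn ℝ (Set.Ici 0) f) :
    ∃ c : EReal, Tendsto (fun x => ((x * f (1 / x) : ℝ) : EReal)) (𝓝[>] (0:ℝ)) (𝓝 c) ∧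
      (c = ⊤ ∨ ∃ r : ℝ, c = (r : EReal) ∧
        ∀ a b : ℝ, 0 ≤ a → a ≤ b → f b - f a ≤ r * (b - a)) := by
  set g : ℝ → ℝ := fun s => (f (max s 1) - f 0) / (max s 1) with hg
  have hgmono : Monotone (fun s => ((g s : ℝ) : EReal)) := by
    intro s t hst
    rw [EReal.coe_le_coe_iff]
    rcases eq_or_lt_of_le (max_le_max hst (le_refl (1:ℝ))) with h | h
    · simp only [hg, h, le_refl]
    · have h1 : (0:ℝ) < max s 1 := lt_of_lt_of_le one_pos (le_max_right _ _)
      have := slope_mono' f hf (le_refl (0:ℝ)) h1 h.le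
      simpa using this
  set c : EReal := ⨆ s : ℝ, ((g s : ℝ) : EReal) with hc
  have hgt : Tendsto (fun s => ((g s : ℝ) : EReal)) atTop (𝓝 c) := tendsto_atTop_iSup hgmono
  have hFeq : ∀ s : ℝ, 1 ≤ s → s⁻¹ * f s = g s + f 0 * s⁻¹ := by
    intro s hs
    have hs0 : s ≠ 0 := by linarith
    rw [hg]; simp only [max_eq_left hs]
    field_simp
    ring
  have hcb : ((g 1 : ℝ) : EReal) ≤ c := le_iSup (fun s => ((g s : ℝ) : EReal)) 1
  have hcbot : c ≠ ⊥ := ne_bot_of_le_ne_bot (EReal.coe_ne_bot _) hcb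
  have hFt : Tendsto (fun s : ℝ => ((s⁻¹ * f s : ℝ) : EReal)) atTop (𝓝 c) := by
    rcases eq_top_or_lt_top c with htop | hlt
    · rw [htop] at hgt ⊢
      have hgreal : Tendsto g atTop atTop := by
        rw [tendsto_atTop]
        intro b
        have := (EReal.tendsto_nhds_top_iff_real.mp hgt) b
        filter_upwards [this] with s hs
        exact_mod_cast hs.le
      have h2 : Tendsto (fun s : ℝ => f 0 * s⁻¹) atTop (𝓝 (f 0 * 0)) :=
        tendsto_const_nhds.mul tendsto_inv_atTop_zero
      have hFreal : Tendsto (fun s : ℝ => s⁻¹ * f s) atTop atTop := by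
        have := hgreal.atTop_add h2
        apply this.congr'
        filter_upwards [eventually_ge_atTop (1:ℝ)] with s hs
        exact (hFeq s hs).symm
      rw [EReal.tendsto_nhds_top_iff_real]
      intro y
      filter_upwards [hFreal.eventually_gt_atTop y] with s hs
      exact_mod_cast hs
    · set r : ℝ := c.toReal with hrr
      have hr : c = (r : EReal) := (EReal.coe_toReal hlt.ne hcbot).symm
      rw [hr] at hgt ⊢
      have hgreal : Tendsto g atTop (𝓝 r) := EReal.tendsto_coe.mp hgt
      have h2 : Tendsto (fun s : ℝ => f 0 * s⁻¹) atTop (𝓝 (f 0 * 0)) :=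
        tendsto_const_nhds.mul tendsto_inv_atTop_zero
      have hFreal : Tendsto (fun s : ℝ => s⁻¹ * f s) atTop (𝓝 r) := by
        have := hgreal.add h2
        rw [mul_zero, add_zero] at this
        apply this.congr'
        filter_upwards [eventually_ge_atTop (1:ℝ)] with s hs
        exact (hFeq s hs).symm
      exact EReal.tendsto_coe.mpr hFreal
  refine ⟨c, ?_, ?_⟩
  · have := hFt.comp tendsto_inv_nhdsGT_zero
    apply this.congr'
    filter_upwards [self_mem_nhdsWithin] with x (hx : x ∈ Set.Ioi (0:ℝ))
    simp only [Function.comp, inv_inv, one_div]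
  · rcases eq_top_or_lt_top c with htop | hlt
    · exact Or.inl htop
    · set r : ℝ := c.toReal with hrr
      have hr : c = (r : EReal) := (EReal.coe_toReal hlt.ne hcbot).symm
      refine Or.inr ⟨r, hr, ?_⟩
      intro a b ha hab
      rcases eq_or_lt_of_le hab with rfl | hab
      · simp
      have hgreal : Tendsto g atTop (𝓝 r) := EReal.tendsto_coe.mp (hr ▸ hgt)
      set σ : ℝ := (f b - f a) / (b - a) with hσ
      have key : σ ≤ r := by
        have hht : Tendsto (fun s : ℝ => σ + (f a - f 0 - σ * a) * s⁻¹) atTop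
            (𝓝 (σ + (f a - f 0 - σ * a) * 0)) :=
          tendsto_const_nhds.add (tendsto_const_nhds.mul tendsto_inv_atTop_zero)
        rw [mul_zero, add_zero] at hht
        refine le_of_tendsto_of_tendsto hht hgreal ?_
        filter_upwards [eventually_ge_atTop (max b 1 + 1)] with s hs
        have hmb : b ≤ max b 1 := le_max_left b 1
        have hm1 : (1:ℝ) ≤ max b 1 := le_max_right b 1
        have hs1 : 1 ≤ s := by linarith
        have hsb : b < s := by linarith
        have hs0 : 0 < s := by linarith
        have hfs : σ * (s - a) ≤ f s - f a := by
          have := slope_mono' f hf ha hab hsb.le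
          rw [← hσ] at this
          have hsa : 0 < s - a := by linarith
          calc σ * (s - a) ≤ ((f s - f a) / (s - a)) * (s - a) :=
                mul_le_mul_of_nonneg_right this hsa.le
            _ = f s - f a := by field_simp
        show σ + (f a - f 0 - σ * a) * s⁻¹ ≤ g s
        rw [hg]; simp only [max_eq_left hs1]
        rw [div_eq_inv_mul, ← sub_nonneg]
        have heq : s⁻¹ * (f s - f 0) - (σ + (f a - f 0 - σ * a) * s⁻¹)
            = s⁻¹ * ((f s - f a) - σ * (s - a)) := by field_simp; ring
        rw [heq]
        exact mul_nonneg (by positivity) (by linarith)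
      have hba : b - a ≠ 0 := by linarith
      calc f b - f a = σ * (b - a) := by rw [hσ]; field_simp
        _ ≤ r * (b - a) := mul_le_mul_of_nonneg_right key (by linarith)

/-- real combined divergence, slope r in place of f'(∞) -/
noncomputable def Dcomb {X : Type*} [Fintype X] (π : X → ℝ) (f : ℝ → ℝ) (r : ℝ)
    (M L : X → X → ℝ) : ℝ :=
  ∑ x, ∑ y, π x * (if L x y = 0 then r * M x y else L x y * f (M x y / L x y))

noncomputable def Dmass {X : Type*} [Fintype X] (π : X → ℝ) (M L : X → X → ℝ) : ℝ :=
  ∑ x, ∑ y, (if L x y = 0 then π x * M x y else 0)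

lemma jensen_step {X : Type*} [Fintype X] (f : ℝ → ℝ) (hf : ConvexOn ℝ (Set.Ici 0) f)
    (r : ℝ) (μ ν w : X → ℝ) (hμ : ∀ z, 0 ≤ μ z) (hν : ∀ z, 0 ≤ ν z) (hw : ∀ z, 0 ≤ w z)
    (hm : (∀ a b : ℝ, 0 ≤ a → a ≤ b → f b - f a ≤ r * (b - a)) ∨ (∀ z, ν z = 0 → μ z = 0)) :
    (if (∑ z, ν z * w z) = 0 then r * (∑ z, μ z * w z)
      else (∑ z, ν z * w z) * f ((∑ z, μ z * w z) / (∑ z, ν z * w z)))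
      ≤ ∑ z, (if ν z = 0 then r * μ z else ν z * f (μ z / ν z)) * w z := by
  set W := ∑ z, ν z * w z with hW
  set A := ∑ z, (if ν z = 0 then 0 else μ z * w z) with hA
  set m := ∑ z, (if ν z = 0 then μ z * w z else 0) with hmm
  have hμ'am : ∑ z, μ z * w z = A + m := by
    rw [hA, hmm, ← Finset.sum_add_distrib]
    exact Finset.sum_congr rfl fun z _ => by by_cases h : ν z = 0 <;> simp [h]
  have hA0 : 0 ≤ A := Finset.sum_nonneg fun z _ => by
    by_cases h : ν z = 0 <;> simp [h, mul_nonneg (hμ z) (hw z)]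
  have hm0 : 0 ≤ m := Finset.sum_nonneg fun z _ => by
    by_cases h : ν z = 0 <;> simp [h, mul_nonneg (hμ z) (hw z)]
  have hW0 : 0 ≤ W := Finset.sum_nonneg fun z _ => mul_nonneg (hν z) (hw z)
  set S1 := ∑ z, (if ν z = 0 then 0 else ν z * f (μ z / ν z) * w z) with hS1
  have hRHS : ∑ z, (if ν z = 0 then r * μ z else ν z * f (μ z / ν z)) * w z = S1 + r * m := by
    rw [hS1, hmm, Finset.mul_sum, ← Finset.sum_add_distrib]
    exact Finset.sum_congr rfl fun z _ => by by_cases h : ν z = 0 <;> simp [h] <;> ring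
  rw [hRHS, hμ'am]
  by_cases hWz : W = 0
  · have hz : ∀ z, ν z * w z = 0 := by
      intro z
      exact (Finset.sum_eq_zero_iff_of_nonneg
        (fun z _ => mul_nonneg (hν z) (hw z))).mp (hW ▸ hWz) z (Finset.mem_univ z)
    have hwz : ∀ z, ν z ≠ 0 → w z = 0 := fun z h => by
      rcases mul_eq_zero.mp (hz z) with h' | h'
      · exact absurd h' h
      · exact h'
    have hAz : A = 0 := Finset.sum_eq_zero fun z _ => by
      by_cases h : ν z = 0
      · simp [h]
      · simp [h, hwz z h]
    have hS1z : S1 = 0 := Finset.sum_eq_zero fun z _ => by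
      by_cases h : ν z = 0
      · simp [h]
      · simp [h, hwz z h]
    rw [if_pos hWz, hAz, hS1z]
    simp [mul_add]
  · have hWpos : 0 < W := lt_of_le_of_ne hW0 (Ne.symm hWz)
    rw [if_neg hWz]
    have hm2 : m = 0 ∨ (∀ a b : ℝ, 0 ≤ a → a ≤ b → f b - f a ≤ r * (b - a)) := by
      rcases hm with h | h
      · exact Or.inr h
      · refine Or.inl (Finset.sum_eq_zero fun z _ => ?_)
        by_cases hz : ν z = 0
        · simp [hz, h z hz]
        · simp [hz]
    -- Step A : Jensen
    have stepA : W * f (A / W) ≤ S1 := by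
      have hj := hf.map_sum_le (t := Finset.univ) (w := fun z => ν z * w z / W)
        (p := fun z => if ν z = 0 then 0 else μ z / ν z)
        (fun z _ => div_nonneg (mul_nonneg (hν z) (hw z)) hW0)
        (by rw [← Finset.sum_div, div_self hWz])
        (fun z _ => by
          by_cases h : ν z = 0
          · simp [h, Set.mem_Ici]
          · simp only [h, if_false]
            exact Set.mem_Ici.mpr (div_nonneg (hμ z) (hν z)))
      have e1 : ∑ z, (ν z * w z / W) • (if ν z = 0 then (0:ℝ) else μ z / ν z) = A / W := by
        rw [hA, Finset.sum_div]
        refine Finset.sum_congr rfl fun z _ => ?_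
        by_cases h : ν z = 0
        · simp [h]
        · simp only [h, if_false, smul_eq_mul]
          field_simp
      have e2 : ∑ z, (ν z * w z / W) • f (if ν z = 0 then (0:ℝ) else μ z / ν z) = S1 / W := by
        rw [hS1, Finset.sum_div]
        refine Finset.sum_congr rfl fun z _ => ?_
        by_cases h : ν z = 0
        · simp [h]
        · simp only [h, if_false, smul_eq_mul]
          ring
      rw [e1, e2] at hj
      calc W * f (A / W) ≤ W * (S1 / W) := by
            exact mul_le_mul_of_nonneg_left hj hW0
        _ = S1 := by field_simp
    -- Step B
    have stepB : f ((A + m) / W) ≤ f (A / W) + r * (m / W) := by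
      rcases hm2 with h | h
      · simp [h]
      · have := h (A / W) ((A + m) / W) (div_nonneg hA0 hW0)
          (div_le_div_of_nonneg_right (by linarith) hW0)
        have heq : (A + m) / W - A / W = m / W := by
          rw [div_sub_div_same]; congr 1; ring
        rw [heq] at this
        linarith
    calc W * f ((A + m) / W) ≤ W * (f (A / W) + r * (m / W)) :=
          mul_le_mul_of_nonneg_left stepB hW0
      _ = W * f (A / W) + r * m := by field_simp
      _ ≤ S1 + r * m := by linarith

section helpers
variable {X : Type*} [Fintype X]

lemma ereal_coe_sum {ι : Type*} (s : Finset ι) (b : ι → ℝ) :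
    ((∑ i ∈ s, b i : ℝ) : EReal) = ∑ i ∈ s, ((b i : ℝ) : EReal) := by
  induction s using Finset.cons_induction with
  | empty => simp
  | cons a s ha ih => rw [Finset.sum_cons, Finset.sum_cons, EReal.coe_add, ih]

lemma ereal_sum_mul {ι : Type*} (s : Finset ι) (b : ι → ℝ) (hb : ∀ i ∈ s, 0 ≤ b i) (D : EReal) :
    ∑ i ∈ s, ((b i : ℝ) : EReal) * D = ((∑ i ∈ s, b i : ℝ) : EReal) * D := by
  induction s using Finset.cons_induction with
  | empty => simp
  | cons a s ha ih =>
    rw [Finset.sum_cons, Finset.sum_cons, EReal.coe_add,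
      EReal.right_distrib_of_nonneg (by exact_mod_cast hb a (Finset.mem_cons_self a s))
        (by exact_mod_cast Finset.sum_nonneg fun i hi => hb i (Finset.mem_cons_of_mem hi)),
      ih (fun i hi => hb i (Finset.mem_cons_of_mem hi))]

/-- decomposition of `DfE` into real part and mass times `f'(∞)`. -/
lemma DfE_decomp (π : X → ℝ) (f : ℝ → ℝ) (M L : X → X → ℝ)
    (hπ : ∀ x, 0 ≤ π x) (hM : ∀ x y, 0 ≤ M x y) :
    DfE π f M L = ((Dcomb π f 0 M L : ℝ) : EReal)
      + ((Dmass π M L : ℝ) : EReal) * fDerivInfty f := by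
  have termeq : ∀ x y, (if L x y = 0 then
      (if M x y = 0 then (0:EReal) else ((π x * M x y : ℝ) : EReal) * fDerivInfty f)
    else ((π x * L x y * f (M x y / L x y) : ℝ) : EReal))
      = ((π x * (if L x y = 0 then 0 * M x y else L x y * f (M x y / L x y)) : ℝ) : EReal)
        + (((if L x y = 0 then π x * M x y else 0) : ℝ) : EReal) * fDerivInfty f := by
    intro x y
    by_cases hL : L x y = 0
    · by_cases hMxy : M x y = 0 <;> simp [hL, hMxy, mul_comm]
    · simp [hL, mul_assoc]
  unfold DfE Dcomb Dmass
  calc (∑ x, ∑ y, if L x y = 0 then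
      (if M x y = 0 then (0:EReal) else ((π x * M x y : ℝ) : EReal) * fDerivInfty f)
    else ((π x * L x y * f (M x y / L x y) : ℝ) : EReal))
      = ∑ x, ∑ y, (((π x * (if L x y = 0 then 0 * M x y else L x y * f (M x y / L x y)) : ℝ) : EReal)
        + (((if L x y = 0 then π x * M x y else 0) : ℝ) : EReal) * fDerivInfty f) := by
        exact Finset.sum_congr rfl fun x _ => Finset.sum_congr rfl fun y _ => termeq x y
    _ = ∑ x, ((((∑ y, π x * (if L x y = 0 then 0 * M x y else L x y * f (M x y / L x y))) : ℝ) : EReal)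
        + (((∑ y, if L x y = 0 then π x * M x y else 0) : ℝ) : EReal) * fDerivInfty f) := by
        refine Finset.sum_congr rfl fun x _ => ?_
        rw [Finset.sum_add_distrib, ← ereal_coe_sum,
          ereal_sum_mul Finset.univ _ (fun y _ => by
            by_cases hL : L x y = 0 <;> simp [hL, mul_nonneg (hπ x) (hM x y)])]
    _ = _ := by
        rw [Finset.sum_add_distrib, ← ereal_coe_sum,
          ereal_sum_mul Finset.univ _ (fun x _ => Finset.sum_nonneg fun y _ => by
            by_cases hL : L x y = 0 <;> simp [hL, mul_nonneg (hπ x) (hM x y)])]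

lemma Dcomb_split (π : X → ℝ) (f : ℝ → ℝ) (r : ℝ) (M L : X → X → ℝ) :
    Dcomb π f r M L = Dcomb π f 0 M L + r * Dmass π M L := by
  unfold Dcomb Dmass
  rw [Finset.mul_sum, ← Finset.sum_add_distrib]
  refine Finset.sum_congr rfl fun x _ => ?_
  rw [Finset.mul_sum, ← Finset.sum_add_distrib]
  refine Finset.sum_congr rfl fun y _ => ?_
  by_cases hL : L x y = 0 <;> simp [hL] <;> ring

lemma row_le (f : ℝ → ℝ) (hf : ConvexOn ℝ (Set.Ici 0) f)
    (r : ℝ) (μ ν : X → ℝ) (P : X → X → ℝ) (hμ : ∀ z, 0 ≤ μ z) (hν : ∀ z, 0 ≤ ν z)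
    (hP : IsTransMat P)
    (hm : (∀ a b : ℝ, 0 ≤ a → a ≤ b → f b - f a ≤ r * (b - a)) ∨ (∀ z, ν z = 0 → μ z = 0)) :
    ∑ y, (if (∑ z, ν z * P z y) = 0 then r * (∑ z, μ z * P z y)
        else (∑ z, ν z * P z y) * f ((∑ z, μ z * P z y) / (∑ z, ν z * P z y)))
      ≤ ∑ z, (if ν z = 0 then r * μ z else ν z * f (μ z / ν z)) := by
  calc _ ≤ ∑ y, ∑ z, (if ν z = 0 then r * μ z else ν z * f (μ z / ν z)) * P z y :=
        Finset.sum_le_sum fun y _ =>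
          jensen_step f hf r μ ν (fun z => P z y) hμ hν (fun z => hP.1 z y) hm
    _ = ∑ z, (if ν z = 0 then r * μ z else ν z * f (μ z / ν z)) * ∑ y, P z y := by
        rw [Finset.sum_comm]
        exact Finset.sum_congr rfl fun z _ => by rw [← Finset.mul_sum]
    _ = _ := Finset.sum_congr rfl fun z _ => by rw [hP.2 z, mul_one]

lemma core_le (π : X → ℝ) (hπ : ∀ x, 0 ≤ π x) (f : ℝ → ℝ) (hf : ConvexOn ℝ (Set.Ici 0) f)
    (r : ℝ) (M L P : X → X → ℝ) (hM : ∀ x y, 0 ≤ M x y) (hL : ∀ x y, 0 ≤ L x y)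
    (hP : IsTransMat P)
    (hm : (∀ a b : ℝ, 0 ≤ a → a ≤ b → f b - f a ≤ r * (b - a)) ∨
      (∀ x z, L x z = 0 → M x z = 0)) :
    Dcomb π f r (matMul M P) (matMul L P) ≤ Dcomb π f r M L := by
  unfold Dcomb
  refine Finset.sum_le_sum fun x _ => ?_
  rw [← Finset.mul_sum, ← Finset.mul_sum]
  refine mul_le_mul_of_nonneg_left ?_ (hπ x)
  have := row_le f hf r (fun z => M x z) (fun z => L x z) P (fun z => hM x z)
    (fun z => hL x z) hP (hm.imp id (fun h z => h x z))
  exact this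


lemma Dmass_nonneg (π : X → ℝ) (M L : X → X → ℝ) (hπ : ∀ x, 0 ≤ π x)
    (hM : ∀ x y, 0 ≤ M x y) : 0 ≤ Dmass π M L :=
  Finset.sum_nonneg fun x _ => Finset.sum_nonneg fun y _ => by
    by_cases h : L x y = 0 <;> simp [h, mul_nonneg (hπ x) (hM x y)]

lemma DPI (π : X → ℝ) (hπ : ∀ x, 0 < π x) (f : ℝ → ℝ) (hf : ConvexOn ℝ (Set.Ici 0) f)
    (M L P : X → X → ℝ) (hM : ∀ x y, 0 ≤ M x y) (hL : ∀ x y, 0 ≤ L x y) (hP : IsTransMat P) :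
    DfE π f (matMul M P) (matMul L P) ≤ DfE π f M L := by
  obtain ⟨c, hT, hc⟩ := fDI_exists f hf
  have hD : fDerivInfty f = c := hT.limUnder_eq
  have hπ' : ∀ x, 0 ≤ π x := fun x => (hπ x).le
  have hM' : ∀ x y, 0 ≤ matMul M P x y := fun x y =>
    Finset.sum_nonneg fun z _ => mul_nonneg (hM x z) (hP.1 z y)
  rw [DfE_decomp π f M L hπ' hM, DfE_decomp π f _ _ hπ' hM', hD]
  rcases hc with htop | ⟨r, hr, hslope⟩
  · subst htop
    by_cases hB : Dmass π M L = 0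
    · have habs : ∀ x z, L x z = 0 → M x z = 0 := by
        intro x z hLz
        have h0 := (Finset.sum_eq_zero_iff_of_nonneg (fun x _ =>
          Finset.sum_nonneg fun y _ => by
            by_cases h : L x y = 0 <;> simp [h, mul_nonneg (hπ' x) (hM x y)])).mp hB x
          (Finset.mem_univ x)
        have h1 := (Finset.sum_eq_zero_iff_of_nonneg (fun y _ => by
          by_cases h : L x y = 0 <;> simp [h, mul_nonneg (hπ' x) (hM x y)])).mp h0 z
          (Finset.mem_univ z)
        rw [if_pos hLz] at h1
        exact (mul_eq_zero.mp h1).resolve_left (hπ x).ne'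
      have habs' : ∀ x y, matMul L P x y = 0 → matMul M P x y = 0 := by
        intro x y h
        have hz := (Finset.sum_eq_zero_iff_of_nonneg
          (fun z _ => mul_nonneg (hL x z) (hP.1 z y))).mp h
        refine Finset.sum_eq_zero fun z _ => ?_
        by_cases hp : P z y = 0
        · rw [hp, mul_zero]
        · have hLz : L x z = 0 :=
            (mul_eq_zero.mp (hz z (Finset.mem_univ z))).resolve_right hp
          rw [habs x z hLz, zero_mul]
      have hB' : Dmass π (matMul M P) (matMul L P) = 0 := by
        refine Finset.sum_eq_zero fun x _ => Finset.sum_eq_zero fun y _ => ?_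
        by_cases h : matMul L P x y = 0
        · simp [h, habs' x y h]
        · simp [h]
      rw [hB, hB']
      simp only [EReal.coe_zero, zero_mul, add_zero]
      exact_mod_cast core_le π hπ' f hf 0 M L P hM hL hP (Or.inr habs)
    · have hBpos : (0:ℝ) < Dmass π M L :=
        lt_of_le_of_ne (Dmass_nonneg π M L hπ' hM) (Ne.symm hB)
      rw [EReal.coe_mul_top_of_pos hBpos, EReal.coe_add_top]
      exact le_top
  · rw [hr, ← EReal.coe_mul, ← EReal.coe_add, ← EReal.coe_mul, ← EReal.coe_add,
      EReal.coe_le_coe_iff]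
    have h := core_le π hπ' f hf r M L P hM hL hP (Or.inl hslope)
    rw [Dcomb_split π f r (matMul M P) (matMul L P), Dcomb_split π f r M L] at h
    linarith

lemma DfE_self (π : X → ℝ) (f : ℝ → ℝ) (hf1 : f 1 = 0) (M : X → X → ℝ) :
    DfE π f M M = 0 := by
  unfold DfE
  refine Finset.sum_eq_zero fun x _ => Finset.sum_eq_zero fun y _ => ?_
  by_cases h : M x y = 0
  · simp [h]
  · rw [if_neg h, div_self h, hf1, mul_zero, EReal.coe_zero]

lemma matMul_trans {M P : X → X → ℝ} (hM : IsTransMat M) (hP : IsTransMat P) :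
    IsTransMat (matMul M P) := by
  constructor
  · exact fun x y => Finset.sum_nonneg fun z _ => mul_nonneg (hM.1 x z) (hP.1 z y)
  · intro x
    unfold matMul
    rw [Finset.sum_comm]
    calc ∑ z, ∑ y, M x z * P z y = ∑ z, M x z * ∑ y, P z y := by
          exact Finset.sum_congr rfl fun z _ => by rw [← Finset.mul_sum]
      _ = 1 := by simp only [hP.2, mul_one]; exact hM.2 x

lemma matMul_assoc (M P Q : X → X → ℝ) :
    matMul (matMul M P) Q = matMul M (matMul P Q) := by
  funext x y
  unfold matMul
  simp only [Finset.sum_mul, Finset.mul_sum]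
  rw [Finset.sum_comm]
  exact Finset.sum_congr rfl fun z _ => Finset.sum_congr rfl fun w _ => by ring

lemma DfE_nonneg [Nonempty X] (π : X → ℝ) (hπ : ∀ x, 0 < π x) (f : ℝ → ℝ)
    (hf : ConvexOn ℝ (Set.Ici 0) f) (hf1 : f 1 = 0)
    {M L : X → X → ℝ} (hM : IsTransMat M) (hL : IsTransMat L) :
    0 ≤ DfE π f M L := by
  set P0 : X → X → ℝ := fun _ _ => (Fintype.card X : ℝ)⁻¹ with hP0
  have hcard : (0:ℝ) < (Fintype.card X : ℝ) := by
    exact_mod_cast Fintype.card_pos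
  have hP0t : IsTransMat P0 := by
    constructor
    · intro x y; positivity
    · intro x
      simp [hP0, Finset.sum_const, Finset.card_univ, nsmul_eq_mul,
        mul_inv_cancel₀ hcard.ne']
  have heq : matMul M P0 = matMul L P0 := by
    funext x y
    unfold matMul
    simp only [hP0, ← Finset.sum_mul, hM.2, hL.2]
  have := DPI π hπ f hf M L P0 hM.1 hL.1 hP0t
  rw [heq, DfE_self π f hf1] at this
  exact this

end helpers


/-- Submultiplicativity of the f-divergence ergodicity coefficient. -/
theorem stmt14 {X : Type*} [Fintype X] [Nonempty X]
    (π : X → ℝ) (hπ : ∀ x, 0 < π x) (hπ1 : ∑ x, π x = 1)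
    (f : ℝ → ℝ) (hf : ConvexOn ℝ (Set.Ici 0) f) (hf1 : f 1 = 0)
    (P Q : X → X → ℝ) (hP : IsTransMat P) (hQ : IsTransMat Q) :
    etaF π f (matMul P Q) ≤ etaF π f P * etaF π f Q := by
  refine sSup_le ?_
  rintro r ⟨M, L, hM, hL, hML, hpos, hfin, rfl⟩
  have hbot : DfE π f M L ≠ ⊥ := ne_bot_of_gt hpos
  set d : ℝ := (DfE π f M L).toReal with hdd
  have hdcoe : ((d : ℝ) : EReal) = DfE π f M L := EReal.coe_toReal hfin hbot
  have hdpos : (0:ℝ) < d := by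
    rw [← hdcoe] at hpos
    exact_mod_cast hpos
  set M' := matMul M P with hM'def
  set L' := matMul L P with hL'def
  have hM' : IsTransMat M' := matMul_trans hM hP
  have hL' : IsTransMat L' := matMul_trans hL hP
  have hassocM : matMul M (matMul P Q) = matMul M' Q := (matMul_assoc M P Q).symm
  have hassocL : matMul L (matMul P Q) = matMul L' Q := (matMul_assoc L P Q).symm
  have he_nonneg : 0 ≤ DfE π f M' L' := DfE_nonneg π hπ f hf hf1 hM' hL'
  have he_le : DfE π f M' L' ≤ DfE π f M L := DPI π hπ f hf M L P hM.1 hL.1 hP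
  have he_fin : DfE π f M' L' ≠ ⊤ := (lt_of_le_of_lt he_le (lt_top_iff_ne_top.mpr hfin)).ne
  have he_bot : DfE π f M' L' ≠ ⊥ := fun h => by simp [h] at he_nonneg
  set e : ℝ := (DfE π f M' L').toReal with hee
  have hecoe : ((e : ℝ) : EReal) = DfE π f M' L' := EReal.coe_toReal he_fin he_bot
  have he0 : (0:ℝ) ≤ e := by
    rw [← hecoe] at he_nonneg
    exact_mod_cast he_nonneg
  have hg_nonneg : 0 ≤ DfE π f (matMul M' Q) (matMul L' Q) :=
    DfE_nonneg π hπ f hf hf1 (matMul_trans hM' hQ) (matMul_trans hL' hQ)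
  have hg_le : DfE π f (matMul M' Q) (matMul L' Q) ≤ DfE π f M' L' :=
    DPI π hπ f hf M' L' Q hM'.1 hL'.1 hQ
  have hg_fin : DfE π f (matMul M' Q) (matMul L' Q) ≠ ⊤ :=
    (lt_of_le_of_lt hg_le (lt_top_iff_ne_top.mpr he_fin)).ne
  have hg_bot : DfE π f (matMul M' Q) (matMul L' Q) ≠ ⊥ := fun h => by simp [h] at hg_nonneg
  set g : ℝ := (DfE π f (matMul M' Q) (matMul L' Q)).toReal with hgg
  have hgcoe : ((g : ℝ) : EReal) = DfE π f (matMul M' Q) (matMul L' Q) :=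
    EReal.coe_toReal hg_fin hg_bot
  have hg0 : (0:ℝ) ≤ g := by
    rw [← hgcoe] at hg_nonneg
    exact_mod_cast hg_nonneg
  have hdinv : (0:EReal) ≤ ((d⁻¹ : ℝ) : EReal) := by
    exact_mod_cast inv_nonneg.mpr hdpos.le
  have hetaP : 0 ≤ etaF π f P := by
    refine le_trans (mul_nonneg he_nonneg hdinv) (le_sSup ?_)
    exact ⟨M, L, hM, hL, hML, hpos, hfin, rfl⟩
  have hetaQ : 0 ≤ etaF π f Q := by
    have hnn : 0 ≤ DfE π f (matMul M Q) (matMul L Q) :=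
      DfE_nonneg π hπ f hf hf1 (matMul_trans hM hQ) (matMul_trans hL hQ)
    refine le_trans (mul_nonneg hnn hdinv) (le_sSup ?_)
    exact ⟨M, L, hM, hL, hML, hpos, hfin, rfl⟩
  rw [hassocM, hassocL]
  rcases eq_or_lt_of_le he0 with heq | hepos
  · have hgz : DfE π f (matMul M' Q) (matMul L' Q) = 0 := by
      refine le_antisymm ?_ hg_nonneg
      rw [← hecoe, ← heq] at hg_le
      exact_mod_cast hg_le
    rw [hgz, EReal.zero_mul]
    exact mul_nonneg hetaP hetaQ
  · have hML' : M' ≠ L' := by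
      intro h
      have h0 : DfE π f M' L' = 0 := by rw [h]; exact DfE_self π f hf1 L'
      rw [h0] at hecoe
      exact absurd (by exact_mod_cast hecoe : e = 0) (ne_of_gt hepos)
    have hmemP : DfE π f M' L' * ((d⁻¹ : ℝ) : EReal) ∈
        {r : EReal | ∃ M L : X → X → ℝ, IsTransMat M ∧ IsTransMat L ∧ M ≠ L ∧
          0 < DfE π f M L ∧ DfE π f M L ≠ ⊤ ∧
          r = DfE π f (matMul M P) (matMul L P) * ((((DfE π f M L).toReal)⁻¹ : ℝ) : EReal)} :=
      ⟨M, L, hM, hL, hML, hpos, hfin, rfl⟩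
    have hmemQ : DfE π f (matMul M' Q) (matMul L' Q) * ((e⁻¹ : ℝ) : EReal) ∈
        {r : EReal | ∃ M L : X → X → ℝ, IsTransMat M ∧ IsTransMat L ∧ M ≠ L ∧
          0 < DfE π f M L ∧ DfE π f M L ≠ ⊤ ∧
          r = DfE π f (matMul M Q) (matMul L Q) * ((((DfE π f M L).toReal)⁻¹ : ℝ) : EReal)} :=
      ⟨M', L', hM', hL', hML', by rw [← hecoe]; exact_mod_cast hepos, he_fin, rfl⟩
    have h2 : ((e * d⁻¹ : ℝ) : EReal) ≤ etaF π f P := by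
      rw [EReal.coe_mul, hecoe]
      exact le_sSup hmemP
    have h1 : ((g * e⁻¹ : ℝ) : EReal) ≤ etaF π f Q := by
      rw [EReal.coe_mul, hgcoe]
      exact le_sSup hmemQ
    rw [← hgcoe, ← EReal.coe_mul]
    have hreal : g * d⁻¹ = (e * d⁻¹) * (g * e⁻¹) := by
      field_simp
    rw [hreal, EReal.coe_mul]
    calc ((e * d⁻¹ : ℝ) : EReal) * ((g * e⁻¹ : ℝ) : EReal)
        ≤ etaF π f P * ((g * e⁻¹ : ℝ) : EReal) :=
          mul_le_mul_of_nonneg_right h2 (by exact_mod_cast mul_nonneg hg0 (inv_nonneg.mpr he0))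
      _ ≤ etaF π f P * etaF π f Q :=
          mul_le_mul_of_nonneg_left h1 hetaP
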